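/- Let γ > 0 and ν ≥ 0, and set ā = 2√(γν). Then ∫_ℝ min( ν − h²/(4γ), 0 ) dγ₁(h) = 2·[ −(1/(4γ))·( ā·e^{−ā²/2}/√(2π) + (1/2)·erfc(ā/√2) ) + (ν/2)·erfc(ā/√2) ]. -/

import Mathlib

open MeasureTheory ProbabilityTheory Real
open scoped NNReal ENNReal

/-- The error function `erf x = (2/√π) ∫₀ˣ e^{-t²} dt`. -/
noncomputable def erf (x : ℝ) : ℝ := (2 / Real.sqrt π) * ∫ t in (0:ℝ)..x, Real.exp (-t ^ 2)

/-- The complementary error function `erfc x = 1 - erf x`. -/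
noncomputable def erfc (x : ℝ) : ℝ := 1 - erf x

lemma integrableE : Integrable (fun x : ℝ => Real.exp (-x ^ 2 / 2)) := by
  have h : (fun x : ℝ => Real.exp (-x ^ 2 / 2)) = fun x => Real.exp (-(1/2) * x ^ 2) := by
    funext x; congr 1; ring
  rw [h]
  exact integrable_exp_neg_mul_sq (by norm_num)

lemma integrableX2E : Integrable (fun x : ℝ => x ^ 2 * Real.exp (-x ^ 2 / 2)) := by
  have h := integrable_rpow_mul_exp_neg_mul_sq (b := (1:ℝ)/2) (by norm_num) (s := 2) (by norm_num)
  have e : (fun x : ℝ => x ^ ((2:ℝ)) * Real.exp (-(1/2) * x ^ 2))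
      = fun x : ℝ => x ^ 2 * Real.exp (-x ^ 2 / 2) := by
    funext x
    rw [show ((2:ℝ)) = ((2:ℕ):ℝ) from by norm_num, Real.rpow_natCast]
    congr 1; ring
  rw [← e]
  exact h

lemma tendstoNegXE : Filter.Tendsto (fun x : ℝ => -x * Real.exp (-x ^ 2 / 2))
    Filter.atTop (nhds 0) := by
  have h := (rpow_mul_exp_neg_mul_sq_isLittleO_exp_neg (b := (1:ℝ)/2) (by norm_num) 1).isBigO
  have hg : Filter.Tendsto (fun x : ℝ => Real.exp (-(1/2) * x)) Filter.atTop (nhds 0) := by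
    refine Real.tendsto_exp_comp_nhds_zero.mpr ?_
    have h1 : Filter.Tendsto (fun x : ℝ => (1/2 : ℝ) * x) Filter.atTop Filter.atTop :=
      Filter.Tendsto.const_mul_atTop (by norm_num) Filter.tendsto_id
    exact (Filter.tendsto_neg_atTop_atBot.comp h1).congr
      (fun x => by simp [Function.comp_def, neg_mul])
  have key := h.trans_tendsto hg
  have e : (fun x : ℝ => -x * Real.exp (-x ^ 2 / 2))
      = fun x : ℝ => -(x ^ ((1:ℝ)) * Real.exp (-(1/2) * x ^ 2)) := by
    funext x
    rw [Real.rpow_one, show -x ^ 2 / 2 = -(1/2 : ℝ) * x ^ 2 from by ring]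
    ring
  rw [e]
  simpa using key.neg

lemma ioi_x2_exp (a : ℝ) : ∫ x in Set.Ioi a, x ^ 2 * Real.exp (-x ^ 2 / 2)
    = a * Real.exp (-a ^ 2 / 2) + ∫ x in Set.Ioi a, Real.exp (-x ^ 2 / 2) := by
  have hderiv : ∀ x ∈ Set.Ici a, HasDerivAt (fun y : ℝ => -y * Real.exp (-y ^ 2 / 2))
      (x ^ 2 * Real.exp (-x ^ 2 / 2) - Real.exp (-x ^ 2 / 2)) x := by
    intro x _
    have h1 : HasDerivAt (fun y : ℝ => -y ^ 2 / 2) (-(2 * x ^ (2-1)) / 2) x :=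
      ((hasDerivAt_pow 2 x).neg).div_const 2
    have h2 := h1.exp
    have h3 : HasDerivAt (fun y : ℝ => -y * Real.exp (-y ^ 2 / 2)) _ x :=
      ((hasDerivAt_id x).neg).mul h2
    convert h3 using 1
    simp
    ring
  have hint : IntegrableOn
      (fun x : ℝ => x ^ 2 * Real.exp (-x ^ 2 / 2) - Real.exp (-x ^ 2 / 2)) (Set.Ioi a) :=
    (integrableX2E.sub integrableE).integrableOn
  have h := integral_Ioi_of_hasDerivAt_of_tendsto' hderiv hint tendstoNegXE
  rw [integral_sub integrableX2E.integrableOn integrableE.integrableOn] at h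
  have : -a * Real.exp (-a ^ 2 / 2) = -(a * Real.exp (-a ^ 2 / 2)) := by ring
  rw [this] at h
  linarith

lemma ioi_exp_eq (a : ℝ) (ha : 0 ≤ a) :
    ∫ x in Set.Ioi a, Real.exp (-x ^ 2 / 2)
      = Real.sqrt (2 * π) / 2 * erfc (a / Real.sqrt 2) := by
  have hsplit : ∫ x in Set.Ioi (0:ℝ), Real.exp (-x ^ 2 / 2)
      = (∫ x in Set.Ioc (0:ℝ) a, Real.exp (-x ^ 2 / 2))
        + ∫ x in Set.Ioi a, Real.exp (-x ^ 2 / 2) := by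
    rw [← setIntegral_union (Set.Ioc_disjoint_Ioi le_rfl) measurableSet_Ioi
      integrableE.integrableOn integrableE.integrableOn, Set.Ioc_union_Ioi_eq_Ioi ha]
  have hml : ∫ x in Set.Ioi (0:ℝ), Real.exp (-x ^ 2 / 2) = Real.sqrt (2 * π) / 2 := by
    have h := integral_gaussian_Ioi (1/2)
    rw [show π / (1/2 : ℝ) = 2 * π from by ring] at h
    rw [← h]
    refine setIntegral_congr_fun measurableSet_Ioi fun x _ => ?_
    congr 1; ring
  have hIoc : ∫ x in Set.Ioc (0:ℝ) a, Real.exp (-x ^ 2 / 2)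
      = ∫ x in (0:ℝ)..a, Real.exp (-x ^ 2 / 2) :=
    (intervalIntegral.integral_of_le ha).symm
  have h2 : (Real.sqrt 2) ≠ 0 := by positivity
  have hsub : ∫ x in (0:ℝ)..a, Real.exp (-x ^ 2 / 2)
      = Real.sqrt 2 * ∫ t in (0:ℝ)..(a / Real.sqrt 2), Real.exp (-t ^ 2) := by
    have h := intervalIntegral.integral_comp_div (a := (0:ℝ)) (b := a)
      (f := fun t => Real.exp (-t ^ 2)) h2
    rw [zero_div, smul_eq_mul] at h
    rw [← h]
    refine intervalIntegral.integral_congr fun x _ => ?_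
    congr 1
    rw [div_pow, Real.sq_sqrt (by norm_num : (0:ℝ) ≤ 2)]
    ring
  have hspi : Real.sqrt (2 * π) = Real.sqrt 2 * Real.sqrt π :=
    Real.sqrt_mul (by norm_num) π
  have hsp : (0:ℝ) < Real.sqrt π := Real.sqrt_pos.mpr Real.pi_pos
  have hmain : ∫ x in Set.Ioi a, Real.exp (-x ^ 2 / 2)
      = Real.sqrt (2 * π) / 2
        - Real.sqrt 2 * ∫ t in (0:ℝ)..(a / Real.sqrt 2), Real.exp (-t ^ 2) := by
    rw [← hsub, ← hIoc]
    linarith [hsplit, hml]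
  rw [hmain, erfc, erf, hspi]
  field_simp

lemma integrableG (γ ν : ℝ) (hγ : 0 < γ) (hν : 0 ≤ ν) :
    Integrable (fun x : ℝ => Real.exp (-x ^ 2 / 2) * min (ν - x ^ 2 / (4 * γ)) 0) := by
  have hb : Integrable (fun x : ℝ =>
      ν * Real.exp (-x ^ 2 / 2) + (1 / (4 * γ)) * (x ^ 2 * Real.exp (-x ^ 2 / 2))) :=
    (integrableE.const_mul ν).add (integrableX2E.const_mul _)
  refine hb.mono' ?_ ?_
  · have hc : Continuous (fun x : ℝ => Real.exp (-x ^ 2 / 2) * min (ν - x ^ 2 / (4 * γ)) 0) := by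
      fun_prop
    exact hc.aestronglyMeasurable
  · filter_upwards with x
    have hE : (0:ℝ) < Real.exp (-x ^ 2 / 2) := Real.exp_pos _
    rw [Real.norm_eq_abs, abs_mul, abs_of_pos hE]
    have hx4 : (0:ℝ) ≤ x ^ 2 / (4 * γ) := by positivity
    have h1 : |min (ν - x ^ 2 / (4 * γ)) 0| ≤ ν + x ^ 2 / (4 * γ) := by
      rcases le_total (ν - x ^ 2 / (4 * γ)) 0 with h | h
      · rw [min_eq_left h, abs_of_nonpos h]; linarith
      · rw [min_eq_right h, abs_zero]; linarith
    calc Real.exp (-x ^ 2 / 2) * |min (ν - x ^ 2 / (4 * γ)) 0|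
        ≤ Real.exp (-x ^ 2 / 2) * (ν + x ^ 2 / (4 * γ)) :=
          mul_le_mul_of_nonneg_left h1 hE.le
      _ = ν * Real.exp (-x ^ 2 / 2) + (1 / (4 * γ)) * (x ^ 2 * Real.exp (-x ^ 2 / 2)) := by
          field_simp

/-- The Gaussian integral `f₂₁` appearing at the first level of lifting:
`∫ min(ν - h²/(4γ), 0) dγ₁(h)` in closed form. -/
theorem stmt6 (γ ν : ℝ) (hγ : 0 < γ) (hν : 0 ≤ ν)
    (abar : ℝ) (habar : abar = 2 * Real.sqrt (γ * ν)) :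
    ∫ h : ℝ, min (ν - h ^ 2 / (4 * γ)) 0 ∂(gaussianReal 0 1) =
      2 * (-(1 / (4 * γ)) *
          (abar * Real.exp (-abar ^ 2 / 2) / Real.sqrt (2 * π)
            + (1 / 2) * erfc (abar / Real.sqrt 2))
        + (ν / 2) * erfc (abar / Real.sqrt 2)) := by
  have ha0 : (0:ℝ) ≤ abar := by rw [habar]; positivity
  have ha2 : abar ^ 2 = 4 * γ * ν := by
    rw [habar, mul_pow, Real.sq_sqrt (mul_nonneg hγ.le hν)]; ring
  rw [gaussianReal_of_var_ne_zero 0 (one_ne_zero : (1:ℝ≥0) ≠ 0)]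
  have hpdf : gaussianPDF 0 1
      = fun x => ((Real.toNNReal (gaussianPDFReal 0 1 x) : ℝ≥0) : ℝ≥0∞) := rfl
  rw [hpdf, integral_withDensity_eq_integral_smul
    ((measurable_gaussianPDFReal 0 1).real_toNNReal) _]
  have h1 : ∀ x : ℝ, (Real.toNNReal (gaussianPDFReal 0 1 x)) • min (ν - x ^ 2 / (4 * γ)) 0
      = (Real.sqrt (2 * π))⁻¹ * (Real.exp (-x ^ 2 / 2) * min (ν - x ^ 2 / (4 * γ)) 0) := by
    intro x
    rw [NNReal.smul_def, Real.coe_toNNReal _ (gaussianPDFReal_nonneg _ _ _)]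
    simp only [gaussianPDFReal, NNReal.coe_one, mul_one, sub_zero, smul_eq_mul]
    ring
  simp_rw [h1]
  rw [integral_const_mul]
  have habs : (∫ x : ℝ, Real.exp (-x ^ 2 / 2) * min (ν - x ^ 2 / (4 * γ)) 0)
      = 2 * ∫ x in Set.Ioi (0:ℝ), Real.exp (-x ^ 2 / 2) * min (ν - x ^ 2 / (4 * γ)) 0 := by
    rw [← integral_comp_abs
      (f := fun t : ℝ => Real.exp (-t ^ 2 / 2) * min (ν - t ^ 2 / (4 * γ)) 0)]
    refine integral_congr_ae (Filter.Eventually.of_forall fun x => ?_)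
    simp [sq_abs]
  rw [habs]
  have hz : ∫ x in Set.Ioc (0:ℝ) abar, Real.exp (-x ^ 2 / 2) * min (ν - x ^ 2 / (4 * γ)) 0
      = 0 := by
    rw [setIntegral_congr_fun measurableSet_Ioc (g := fun _ => (0:ℝ)) ?_]
    · simp
    · intro x hx
      have hx2 : x ^ 2 ≤ abar ^ 2 := pow_le_pow_left₀ hx.1.le hx.2 2
      have hle : x ^ 2 / (4 * γ) ≤ ν := by
        rw [div_le_iff₀ (by positivity)]
        nlinarith
      have : min (ν - x ^ 2 / (4 * γ)) 0 = 0 := min_eq_right (by linarith)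
      simp [this]
  have hsplitIoi : ∫ x in Set.Ioi (0:ℝ), Real.exp (-x ^ 2 / 2) * min (ν - x ^ 2 / (4 * γ)) 0
      = ∫ x in Set.Ioi abar, Real.exp (-x ^ 2 / 2) * min (ν - x ^ 2 / (4 * γ)) 0 := by
    rw [← Set.Ioc_union_Ioi_eq_Ioi ha0,
      setIntegral_union (Set.Ioc_disjoint_Ioi le_rfl) measurableSet_Ioi
        (integrableG γ ν hγ hν).integrableOn (integrableG γ ν hγ hν).integrableOn, hz, zero_add]
  rw [hsplitIoi]
  have hIoiA : ∫ x in Set.Ioi abar, Real.exp (-x ^ 2 / 2) * min (ν - x ^ 2 / (4 * γ)) 0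
      = ν * (∫ x in Set.Ioi abar, Real.exp (-x ^ 2 / 2))
        - (1 / (4 * γ)) * ∫ x in Set.Ioi abar, x ^ 2 * Real.exp (-x ^ 2 / 2) := by
    have hcong : ∀ x ∈ Set.Ioi abar, Real.exp (-x ^ 2 / 2) * min (ν - x ^ 2 / (4 * γ)) 0
        = ν * Real.exp (-x ^ 2 / 2) - (1 / (4 * γ)) * (x ^ 2 * Real.exp (-x ^ 2 / 2)) := by
      intro x hx
      have hx2 : abar ^ 2 ≤ x ^ 2 := pow_le_pow_left₀ ha0 hx.le 2
      have hge : ν ≤ x ^ 2 / (4 * γ) := by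
        rw [le_div_iff₀ (by positivity)]
        nlinarith
      rw [min_eq_left (by linarith)]
      field_simp
    rw [setIntegral_congr_fun measurableSet_Ioi hcong,
      integral_sub ((integrableE.const_mul ν)).integrableOn
        ((integrableX2E.const_mul _)).integrableOn,
      integral_const_mul, integral_const_mul]
  rw [hIoiA, ioi_x2_exp abar, ioi_exp_eq abar ha0]
  have hs : (0:ℝ) < Real.sqrt (2 * π) := by positivity
  field_simp
  ring
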